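/- With Z_0 := 0, one has f ∘ T_{[i]} = Z_i − E[Z_{i−1} | 𝓕_i] μ-almost everywhere for every i ≥ 1, and consequently S_n = ∑_{k=1}^{n−1} (Z_k − E[Z_k | 𝓕_{k+1}]) + Z_n μ-almost everywhere for every n ≥ 1. -/

import Mathlib

/-!
Setting: `(X, 𝓕, μ)` a probability space, `A` an index set, `T a : X → X` measurable,
surjective, non-invertible, `μ`-preserving maps, and a fixed sequence `a 1, a 2, … ∈ A`.
`T_{[k]} := T_{a_k} ∘ ⋯ ∘ T_{a_1}`.  The Koopman operator `T̂ g = g ∘ T` acts on `L²(μ)` and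
the Perron–Frobenius operator `T̂*` is its `L²(μ)`-adjoint.
-/

open MeasureTheory ProbabilityTheory Filter
open scoped ENNReal Topology

/-- The Koopman operator `g ↦ g ∘ T` on `L²(μ)`. -/
noncomputable def koopman {X : Type*} [MeasurableSpace X] {μ : Measure X} {T : X → X}
    (hT : MeasurePreserving T μ μ) : Lp ℝ 2 μ →L[ℝ] Lp ℝ 2 μ :=
  (Lp.compMeasurePreservingₗᵢ ℝ T hT).toContinuousLinearMap

/-- The Perron–Frobenius operator: the `L²(μ)`-adjoint of the Koopman operator. -/
noncomputable def PF {X : Type*} [MeasurableSpace X] {μ : Measure X} {T : X → X}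
    (hT : MeasurePreserving T μ μ) : Lp ℝ 2 μ →L[ℝ] Lp ℝ 2 μ :=
  ContinuousLinearMap.adjoint (koopman hT)

/-- `Titer T a k = T_{[k]} = T_{a_k} ∘ ⋯ ∘ T_{a_1}` (the identity for `k = 0`). -/
def Titer {X A : Type*} (T : A → X → X) (a : ℕ → A) : ℕ → X → X
  | 0 => id
  | k + 1 => T (a (k + 1)) ∘ Titer T a k

/-- `PFseg hT a i j = T̂*_{[i..j]} = T̂*_{a_j} ⋯ T̂*_{a_i}` for `i ≤ j`, the identity otherwise. -/
noncomputable def PFseg {X A : Type*} [MeasurableSpace X] {μ : Measure X} {T : A → X → X}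
    (hT : ∀ b, MeasurePreserving (T b) μ μ) (a : ℕ → A) (i : ℕ) :
    ℕ → (Lp ℝ 2 μ →L[ℝ] Lp ℝ 2 μ)
  | 0 => ContinuousLinearMap.id ℝ _
  | j + 1 =>
    if i ≤ j + 1 then (PF (hT (a (j + 1)))).comp (PFseg hT a i j)
    else ContinuousLinearMap.id ℝ _

/-- `T̂*_{b_1} ⋯ T̂*_{b_k} g` for a finite sequence `[b_1, …, b_k]`. -/
noncomputable def PFlist {X A : Type*} [MeasurableSpace X] {μ : Measure X} {T : A → X → X}
    (hT : ∀ b, MeasurePreserving (T b) μ μ) (l : List A) (g : Lp ℝ 2 μ) : Lp ℝ 2 μ :=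
  l.foldr (fun b h => PF (hT b) h) g

/-- `useq hT a f k = u_k = ∑_{i=1}^k T̂*_{[i+1..k]} f`. -/
noncomputable def useq {X A : Type*} [MeasurableSpace X] {μ : Measure X} {T : A → X → X}
    (hT : ∀ b, MeasurePreserving (T b) μ μ) (a : ℕ → A) (f : Lp ℝ 2 μ) (k : ℕ) : Lp ℝ 2 μ :=
  ∑ i ∈ Finset.Icc 1 k, PFseg hT a (i + 1) k f

/-- The Birkhoff-like sums `S_n = ∑_{k=1}^n f ∘ T_{[k]}`. -/
def birkhoffS {X A : Type*} (T : A → X → X) (a : ℕ → A) (f : X → ℝ) (n : ℕ) : X → ℝ :=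
  fun x => ∑ k ∈ Finset.Icc 1 n, f (Titer T a k x)

/-- `cos²χ_k = ‖E[u_k | T_{a_{k+1}}^{-1}(𝓕)]‖²_{L²} / ‖u_k‖²_{L²}` (`= 0` when `u_k = 0`,
by the convention `c / 0 = 0`). -/
noncomputable def cos2chi {X A : Type*} [MeasurableSpace X] (μ : Measure X) {T : A → X → X}
    (hT : ∀ b, MeasurePreserving (T b) μ μ) (a : ℕ → A) (f : Lp ℝ 2 μ) (k : ℕ) : ℝ :=
  (∫ x, ((μ[(useq hT a f k : X → ℝ)|MeasurableSpace.comap (T (a (k + 1))) ‹_›]) x) ^ 2 ∂μ) /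
    ∫ x, ((useq hT a f k : X → ℝ) x) ^ 2 ∂μ

/-- `𝓕_k := T_{[k]}^{-1}(𝓕)`, the pullback σ-algebra. -/
def Fsig {X A : Type*} [m0 : MeasurableSpace X] (T : A → X → X) (a : ℕ → A) (k : ℕ) :
    MeasurableSpace X :=
  MeasurableSpace.comap (Titer T a k) m0

/-- `Z_k := u_k ∘ T_{[k]}`. -/
noncomputable def Zfun {X A : Type*} [MeasurableSpace X] {μ : Measure X} {T : A → X → X}
    (hT : ∀ b, MeasurePreserving (T b) μ μ) (a : ℕ → A) (f : Lp ℝ 2 μ) (k : ℕ) : X → ℝ :=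
  fun x => (useq hT a f k : X → ℝ) (Titer T a k x)

section AuxLemmas

variable {X : Type*} [m0 : MeasurableSpace X] {μ : Measure X} [IsProbabilityMeasure μ]

private lemma setIntegral_comp_preimage' {R : X → X} (hR : MeasurePreserving R μ μ)
    {h : X → ℝ} (hmeas : AEStronglyMeasurable h μ) {B : Set X} (hB : MeasurableSet B) :
    ∫ x in R ⁻¹' B, h (R x) ∂μ = ∫ x in B, h x ∂μ := by
  have hmeas' : AEStronglyMeasurable h (Measure.map R μ) := by rw [hR.map_eq]; exact hmeas
  have := MeasureTheory.setIntegral_map (μ := μ) (g := R) (f := h) hB hmeas' hR.aemeasurable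
  rw [hR.map_eq] at this
  exact this.symm

private lemma integral_PF_eq {Q : X → X} (hQ : MeasurePreserving Q μ μ) (g : Lp ℝ 2 μ)
    {B : Set X} (hB : MeasurableSet B) :
    ∫ x in B, (PF hQ g : X → ℝ) x ∂μ = ∫ x in Q ⁻¹' B, (g : X → ℝ) x ∂μ := by
  set e : Lp ℝ 2 μ := indicatorConstLp 2 hB (measure_ne_top μ B) (1 : ℝ) with he
  have key := ContinuousLinearMap.adjoint_inner_left (𝕜 := ℝ) (koopman hQ) e g
  rw [L2.inner_def, L2.inner_def] at key
  simp only [RCLike.inner_apply, starRingEnd_apply, star_trivial] at key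
  have hcoe_e : (e : X → ℝ) =ᵐ[μ] B.indicator fun _ => (1 : ℝ) :=
    indicatorConstLp_coeFn
  have hcoe_K : (koopman hQ e : X → ℝ) =ᵐ[μ] fun x => (e : X → ℝ) (Q x) :=
    Lp.coeFn_compMeasurePreserving e hQ
  have hcomp : (fun x => (e : X → ℝ) (Q x)) =ᵐ[μ]
      fun x => B.indicator (fun _ => (1 : ℝ)) (Q x) :=
    hQ.quasiMeasurePreserving.ae_eq_comp hcoe_e
  have l1 : ∫ x, (PF hQ g : X → ℝ) x * (e : X → ℝ) x ∂μ
      = ∫ x in B, (PF hQ g : X → ℝ) x ∂μ := by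
    rw [← integral_indicator hB]
    refine integral_congr_ae ?_
    filter_upwards [hcoe_e] with x hx
    rw [hx]
    by_cases hxB : x ∈ B <;> simp [Set.indicator_of_mem, Set.indicator_of_notMem, hxB]
  have l2 : ∫ x, (g : X → ℝ) x * (koopman hQ e : X → ℝ) x ∂μ
      = ∫ x in Q ⁻¹' B, (g : X → ℝ) x ∂μ := by
    rw [← integral_indicator (hQ.measurable hB)]
    refine integral_congr_ae ?_
    filter_upwards [hcoe_K.trans hcomp] with x hx
    rw [hx]
    by_cases hxB : Q x ∈ B <;>
      simp [Set.indicator_of_mem, Set.indicator_of_notMem, hxB, Set.mem_preimage]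
  rw [← l1, ← l2]
  simp only [PF]
  simpa only [mul_comm] using key

private lemma condexp_comp_eq_PF {Q S : X → X} (hQ : MeasurePreserving Q μ μ)
    (hS : MeasurePreserving S μ μ) (g : Lp ℝ 2 μ) :
    μ[(fun x => (g : X → ℝ) (S x)) | MeasurableSpace.comap (fun x => Q (S x)) m0]
      =ᵐ[μ] fun x => (PF hQ g : X → ℝ) (Q (S x)) := by
  have hR : MeasurePreserving (fun x => Q (S x)) μ μ := hQ.comp hS
  have hm : MeasurableSpace.comap (fun x => Q (S x)) m0 ≤ m0 := hR.measurable.comap_le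
  have hint : Integrable (fun x => (PF hQ g : X → ℝ) (Q (S x))) μ :=
    (hR.integrable_comp (Lp.aestronglyMeasurable (PF hQ g))).mpr
      ((Lp.memLp (PF hQ g)).integrable one_le_two)
  refine (ae_eq_condExp_of_forall_setIntegral_eq hm ?_ (fun s _ _ => hint.integrableOn)
    ?_ ?_).symm
  · exact (hS.integrable_comp (Lp.aestronglyMeasurable g)).mpr
      ((Lp.memLp g).integrable one_le_two)
  · rintro s ⟨B, hB, rfl⟩ -
    calc ∫ x in (fun x => Q (S x)) ⁻¹' B, (PF hQ g : X → ℝ) (Q (S x)) ∂μ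
        = ∫ x in B, (PF hQ g : X → ℝ) x ∂μ :=
          setIntegral_comp_preimage' hR (Lp.aestronglyMeasurable (PF hQ g)) hB
      _ = ∫ x in Q ⁻¹' B, (g : X → ℝ) x ∂μ := integral_PF_eq hQ g hB
      _ = ∫ x in S ⁻¹' (Q ⁻¹' B), (g : X → ℝ) (S x) ∂μ :=
          (setIntegral_comp_preimage' hS (Lp.aestronglyMeasurable g)
            (hQ.measurable hB)).symm
  · refine ⟨fun x => (PF hQ g : X → ℝ) (Q (S x)), ?_, EventuallyEq.rfl⟩
    have hRmeas : @Measurable X X (MeasurableSpace.comap (fun x => Q (S x)) m0) m0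
        (fun x => Q (S x)) := fun t ht => ⟨t, ht, rfl⟩
    exact (Lp.stronglyMeasurable (PF hQ g)).comp_measurable hRmeas

private lemma useq_succ {A : Type*} {T : A → X → X} (hT : ∀ b, MeasurePreserving (T b) μ μ)
    (a : ℕ → A) (f : Lp ℝ 2 μ) (k : ℕ) :
    useq hT a f (k + 1) = PF (hT (a (k + 1))) (useq hT a f k) + f := by
  unfold useq
  rw [Finset.sum_Icc_succ_top (Nat.le_add_left 1 k), map_sum]
  congr 1
  · refine Finset.sum_congr rfl fun i hi => ?_
    have hik : i ≤ k := (Finset.mem_Icc.mp hi).2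
    show PFseg hT a (i + 1) (k + 1) f = _
    simp only [PFseg, if_pos (by omega : i + 1 ≤ k + 1)]
    rfl
  · show PFseg hT a (k + 1 + 1) (k + 1) f = f
    simp only [PFseg, if_neg (by omega : ¬ k + 1 + 1 ≤ k + 1)]
    rfl

private lemma Titer_mp {A : Type*} {T : A → X → X} (hT : ∀ b, MeasurePreserving (T b) μ μ)
    (a : ℕ → A) : ∀ k, MeasurePreserving (Titer T a k) μ μ
  | 0 => MeasurePreserving.id μ
  | k + 1 => (hT (a (k + 1))).comp (Titer_mp hT a k)

end AuxLemmas

/-- With `Z_0 = 0`, one has `f ∘ T_{[i]} = Z_i − E[Z_{i−1} | 𝓕_i]` `μ`-a.e. for every `i ≥ 1`,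
and consequently `S_n = ∑_{k=1}^{n−1} (Z_k − E[Z_k | 𝓕_{k+1}]) + Z_n` `μ`-a.e. for all `n ≥ 1`. -/
theorem birkhoff_eq_martingale_decomposition
    {X : Type*} [MeasurableSpace X] (μ : Measure X) [IsProbabilityMeasure μ]
    {A : Type*} (T : A → X → X)
    (hTmeas : ∀ b, Measurable (T b))
    (hT : ∀ b, MeasurePreserving (T b) μ μ)
    (hTsurj : ∀ b, Function.Surjective (T b))
    (hTnoninv : ∀ b, ¬Function.Injective (T b))
    (a : ℕ → A) (f : Lp ℝ 2 μ) (hfmean : ∫ x, f x ∂μ = 0) :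
    (∀ i : ℕ, 1 ≤ i →
      (fun x => (f : X → ℝ) (Titer T a i x)) =ᵐ[μ]
        fun x => Zfun hT a f i x - (μ[Zfun hT a f (i - 1)|Fsig T a i]) x) ∧
    (∀ n : ℕ, 1 ≤ n →
      birkhoffS T a (f : X → ℝ) n =ᵐ[μ]
        fun x => (∑ k ∈ Finset.Icc 1 (n - 1),
          (Zfun hT a f k x - (μ[Zfun hT a f k|Fsig T a (k + 1)]) x)) + Zfun hT a f n x) := by
  have part1 : ∀ i : ℕ, 1 ≤ i →
      (fun x => (f : X → ℝ) (Titer T a i x)) =ᵐ[μ]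
        fun x => Zfun hT a f i x - (μ[Zfun hT a f (i - 1)|Fsig T a i]) x := by
    intro i hi
    obtain ⟨j, rfl⟩ : ∃ j, i = j + 1 := ⟨i - 1, by omega⟩
    have hA : μ[Zfun hT a f j | Fsig T a (j + 1)] =ᵐ[μ]
        fun x => (PF (hT (a (j + 1))) (useq hT a f j) : X → ℝ) (Titer T a (j + 1) x) :=
      condexp_comp_eq_PF (hT (a (j + 1))) (Titer_mp hT a j) (useq hT a f j)
    have hu : ((useq hT a f (j + 1) : X → ℝ)) =ᵐ[μ]
        fun x => (PF (hT (a (j + 1))) (useq hT a f j) : X → ℝ) x + (f : X → ℝ) x := by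
      rw [useq_succ]; exact Lp.coeFn_add _ _
    have hu' : (fun x => (useq hT a f (j + 1) : X → ℝ) (Titer T a (j + 1) x)) =ᵐ[μ]
        fun x => (PF (hT (a (j + 1))) (useq hT a f j) : X → ℝ) (Titer T a (j + 1) x)
          + (f : X → ℝ) (Titer T a (j + 1) x) :=
      (Titer_mp hT a (j + 1)).quasiMeasurePreserving.ae_eq_comp hu
    filter_upwards [hA, hu'] with x h1 h2
    show (f : X → ℝ) (Titer T a (j + 1) x)
      = (useq hT a f (j + 1) : X → ℝ) (Titer T a (j + 1) x)
        - (μ[Zfun hT a f j|Fsig T a (j + 1)]) x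
    rw [h1, h2]; ring
  refine ⟨part1, ?_⟩
  have hZ0 : Zfun hT a f 0 =ᵐ[μ] 0 := by
    have h0 : useq hT a f 0 = 0 := by simp [useq]
    show (fun x => (useq hT a f 0 : X → ℝ) (Titer T a 0 x)) =ᵐ[μ] 0
    rw [h0]
    exact Lp.coeFn_zero ℝ 2 μ
  have hE0 : μ[Zfun hT a f 0|Fsig T a 1] =ᵐ[μ] 0 :=
    (condExp_congr_ae hZ0).trans (by rw [condExp_zero])
  intro n hn
  induction n with
  | zero => omega
  | succ m ih =>
    rcases Nat.eq_zero_or_pos m with hm | hm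
    · subst hm
      have h1 := part1 1 le_rfl
      filter_upwards [h1, hE0] with x hx hx0
      show birkhoffS T a (f : X → ℝ) 1 x = _
      simp only [birkhoffS, Finset.Icc_self, Finset.sum_singleton, Nat.sub_self,
        Finset.Icc_eq_empty_of_lt Nat.zero_lt_one, Finset.sum_empty, zero_add]
      rw [hx]
      simp only [Nat.sub_self] at hx ⊢
      rw [hx0]
      simp
    · obtain ⟨p, rfl⟩ : ∃ p, m = p + 1 := ⟨m - 1, by omega⟩
      have h2 := part1 (p + 2) (by omega)
      have ihh := ih (by omega)
      simp only [show p + 2 - 1 = p + 1 from by omega,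
        show p + 1 - 1 = p from by omega] at h2 ihh ⊢
      filter_upwards [ihh, h2] with x hx1 hx2
      have hb : birkhoffS T a (f : X → ℝ) (p + 2) x
          = birkhoffS T a (f : X → ℝ) (p + 1) x + (f : X → ℝ) (Titer T a (p + 2) x) := by
        simp only [birkhoffS]
        rw [Finset.sum_Icc_succ_top (by omega : 1 ≤ p + 2)]
      have hs : ∑ k ∈ Finset.Icc 1 (p + 1),
            (Zfun hT a f k x - (μ[Zfun hT a f k|Fsig T a (k + 1)]) x)
          = (∑ k ∈ Finset.Icc 1 p,
              (Zfun hT a f k x - (μ[Zfun hT a f k|Fsig T a (k + 1)]) x))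
            + (Zfun hT a f (p + 1) x - (μ[Zfun hT a f (p + 1)|Fsig T a (p + 2)]) x) := by
        rw [Finset.sum_Icc_succ_top (by omega : 1 ≤ p + 1)]
      rw [hb, hx1, hx2, hs]
      ring
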